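/- Let 0<q,t<1, N ≥ 2, a|b| > 0, and set A = C_N(q,t)(1+q)(t^{1-N}q^{-1} - 1) > 0 and B = -C_N(q,t)(t^{1-N}-1) < 0 where C_N(q,t) = (q t^{N-1}/(a|b|))(1-q)(1-t^N)/(1-t). Then for every real u with u ≤ (1+q)/√q one has A + uB ≥ 0. -/

import Mathlib

/-- With `A = C_N(q,t)(1+q)(t^{1-N}q⁻¹-1)` and `B = -C_N(q,t)(t^{1-N}-1)`, one has
`A > 0`, `B < 0`, and `A + uB ≥ 0` for every `u ≤ (1+q)/√q`. -/
theorem bqj_A_plus_uB_nonneg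
    (N : ℕ) (hN : 2 ≤ N) (q t a b : ℝ)
    (hq : 0 < q) (hq1 : q < 1) (ht : 0 < t) (ht1 : t < 1)
    (hb : b < 0) (ha : 0 < a) :
    let C : ℝ := q * t ^ ((N : ℤ) - 1) / (a * |b|) * (1 - q) * (1 - t ^ N) / (1 - t)
    let A : ℝ := C * (1 + q) * (t ^ ((1 : ℤ) - N) * q⁻¹ - 1)
    let B : ℝ := -C * (t ^ ((1 : ℤ) - N) - 1)
    0 < A ∧ B < 0 ∧ ∀ u : ℝ, u ≤ (1 + q) / Real.sqrt q → 0 ≤ A + u * B := by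
  intro C A B
  set s : ℝ := t ^ ((1 : ℤ) - N) with hs_def
  -- s > 1
  have hs1 : 1 < s := by
    have h1 : ((1 : ℤ) - N) = -((N - 1 : ℕ) : ℤ) := by
      have : (1 : ℤ) ≤ (N : ℤ) := by exact_mod_cast Nat.one_le_of_lt hN
      push_cast [Nat.cast_sub (by omega : 1 ≤ N)]
      ring
    have h2 : s = (t ^ (N - 1 : ℕ))⁻¹ := by
      rw [hs_def, h1, zpow_neg, zpow_natCast]
    have h3 : t ^ (N - 1 : ℕ) < 1 := pow_lt_one₀ ht.le ht1 (by omega)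
    have h4 : 0 < t ^ (N - 1 : ℕ) := pow_pos ht _
    rw [h2]
    exact (one_lt_inv₀ h4).mpr h3
  have hC : 0 < C := by
    have h1 : 0 < t ^ ((N : ℤ) - 1) := zpow_pos ht _
    have hab : 0 < a * |b| := mul_pos ha (abs_pos.mpr hb.ne)
    have htN : t ^ N < 1 := pow_lt_one₀ ht.le ht1 (by omega)
    exact div_pos (mul_pos (mul_pos (div_pos (mul_pos hq h1) hab) (by linarith))
      (by linarith)) (by linarith)
  have hqi : 1 < q⁻¹ := (one_lt_inv₀ hq).mpr hq1
  have hA : 0 < A := by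
    have : 1 < s * q⁻¹ := by nlinarith
    have : 0 < s * q⁻¹ - 1 := by linarith
    exact mul_pos (mul_pos hC (by linarith)) this
  have hB : B < 0 := by
    have : 0 < C * (s - 1) := mul_pos hC (by linarith)
    simp only [B, neg_mul]
    linarith
  refine ⟨hA, hB, fun u hu => ?_⟩
  set r : ℝ := Real.sqrt q with hr_def
  have hr : 0 < r := Real.sqrt_pos.mpr hq
  have hr2 : r ^ 2 = q := Real.sq_sqrt hq.le
  have hr1 : r < 1 := by nlinarith
  -- u * B ≥ ((1+q)/r) * B
  have h1 : ((1 + q) / r) * B ≤ u * B := mul_le_mul_of_nonpos_right hu hB.le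
  have h2 : 0 ≤ A + ((1 + q) / r) * B := by
    have hAB : A + ((1 + q) / r) * B
        = C * ((1 + q) * (s * q⁻¹ - 1) - (1 + q) / r * (s - 1)) := by
      simp only [A, B]; ring
    rw [hAB]
    apply mul_nonneg hC.le
    have hkey : (1 + q) / r * (s - 1) ≤ (1 + q) * (s * q⁻¹ - 1) := by
      rw [div_mul_eq_mul_div, div_le_iff₀ hr]
      have hqinv : q⁻¹ = 1 / q := one_div q ▸ rfl
      rw [← hr2]
      have hrne : r ≠ 0 := hr.ne'
      field_simp
      nlinarith [mul_nonneg (mul_nonneg (mul_nonneg (sub_nonneg.mpr hr1.le)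
        (by linarith : (0:ℝ) ≤ s + r)) hr.le) (by nlinarith : (0:ℝ) ≤ 1 + r ^ 2)]
    linarith
  linarith
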